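/- (Lyapunov condition for powers.) Let V ∈ C¹(ℝ^d) be ℤ^d-periodic (so V and ∇V are bounded), and let G(q,p,r) = Ĉ + (13/32)|p|² + (5/16)|r|² + (13/16)V(q) + (3/16)⟨p,r⟩ with Ĉ > 0 chosen so large that G ≥ 1 everywhere and LG ≤ −(1/4)G + d̂ for some d̂ > 0. Then for every integer l ≥ 1 there exist constants a_l, d_l > 0 such that L(G^l)(x) ≤ −a_l G(x)^l + d_l for all x ∈ ℝ^{3d}. -/

import Mathlib

open MeasureTheory Real Filter

noncomputable section

/-- The phase space `ℝ^{3d}` with coordinates `(q, p, r)`. -/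
abbrev Y3 (d : ℕ) := (Fin d → ℝ) × (Fin d → ℝ) × (Fin d → ℝ)

/-- The generator of the generalized Langevin dynamics (all constants set to `1`):
`LG = p·∇_qG − ∇V(q)·∇_pG + r·∇_pG − p·∇_rG − r·∇_rG + Δ_rG`. -/
def Lgle (d : ℕ) (V : (Fin d → ℝ) → ℝ) (G : Y3 d → ℝ) (x : Y3 d) : ℝ :=
  fderiv ℝ G x (x.2.1, 0, 0)
  - fderiv ℝ G x (0, (fun i => fderiv ℝ V x.1 (Pi.single i 1)), 0)
  + fderiv ℝ G x (0, x.2.2, 0)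
  - fderiv ℝ G x (0, 0, x.2.1)
  - fderiv ℝ G x (0, 0, x.2.2)
  + ∑ i, fderiv ℝ (fun y => fderiv ℝ G y (0, 0, Pi.single i 1)) x (0, 0, Pi.single i 1)

namespace LyapAux

lemma hasFDerivAt_pow' {E : Type*} [NormedAddCommGroup E] [NormedSpace ℝ E]
    {f : E → ℝ} {f' : E →L[ℝ] ℝ} {x : E} (h : HasFDerivAt f f' x) (n : ℕ) :
    HasFDerivAt (fun y => f y ^ n) ((((n : ℕ) : ℝ) * f x ^ (n - 1)) • f') x := by
  induction n with
  | zero => simpa using hasFDerivAt_const (1 : ℝ) x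
  | succ n ih =>
      have h2 := ih.fun_mul h
      have h3 : (fun y => f y ^ n * f y) = fun y => f y ^ (n + 1) := by
        funext y; rw [← pow_succ]
      rw [h3] at h2
      have h4 : (f x ^ n • f' + f x • (((n : ℕ) : ℝ) * f x ^ (n - 1)) • f')
          = ((((n + 1 : ℕ) : ℝ)) * f x ^ (n + 1 - 1)) • f' := by
        rw [smul_smul, ← add_smul]
        congr 1
        cases n with
        | zero => norm_num
        | succ m =>
            have hp : f x ^ (m + 1) = f x ^ m * f x := pow_succ (f x) m
            simp only [Nat.add_sub_cancel] at *
            push_cast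
            rw [hp]; ring
      rw [h4] at h2
      exact h2

lemma hasFDerivAt_G (d : ℕ) (V : (Fin d → ℝ) → ℝ) (hV : ContDiff ℝ 1 V)
    (Chat : ℝ) (x : Y3 d) :
    ∃ D : Y3 d →L[ℝ] ℝ,
      HasFDerivAt (fun y : Y3 d => Chat + 13 / 32 * ∑ i, (y.2.1 i) ^ 2
        + 5 / 16 * ∑ i, (y.2.2 i) ^ 2 + 13 / 16 * V y.1
        + 3 / 16 * ∑ i, y.2.1 i * y.2.2 i) D x ∧
      ∀ v : Y3 d, D v = 13/16 * fderiv ℝ V x.1 v.1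
        + ∑ i, (13/16 * x.2.1 i + 3/16 * x.2.2 i) * v.2.1 i
        + ∑ i, (5/8 * x.2.2 i + 3/16 * x.2.1 i) * v.2.2 i := by
  set Pp : Fin d → (Y3 d →L[ℝ] ℝ) := fun i => (ContinuousLinearMap.proj i).comp
    ((ContinuousLinearMap.fst ℝ (Fin d → ℝ) (Fin d → ℝ)).comp
      (ContinuousLinearMap.snd ℝ (Fin d → ℝ) ((Fin d → ℝ) × (Fin d → ℝ)))) with hPp
  set Pr : Fin d → (Y3 d →L[ℝ] ℝ) := fun i => (ContinuousLinearMap.proj i).comp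
    ((ContinuousLinearMap.snd ℝ (Fin d → ℝ) (Fin d → ℝ)).comp
      (ContinuousLinearMap.snd ℝ (Fin d → ℝ) ((Fin d → ℝ) × (Fin d → ℝ)))) with hPr
  have hp : ∀ i : Fin d, HasFDerivAt (fun y : Y3 d => y.2.1 i) (Pp i) x :=
    fun i => (Pp i).hasFDerivAt
  have hr : ∀ i : Fin d, HasFDerivAt (fun y : Y3 d => y.2.2 i) (Pr i) x :=
    fun i => (Pr i).hasFDerivAt
  have hVq : HasFDerivAt (fun y : Y3 d => V y.1)
      ((fderiv ℝ V x.1).comp (ContinuousLinearMap.fst ℝ (Fin d → ℝ) ((Fin d → ℝ) × (Fin d → ℝ)))) x :=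
    ((hV.differentiable one_ne_zero x.1).hasFDerivAt).comp x hasFDerivAt_fst
  have h1 : HasFDerivAt (fun y : Y3 d => ∑ i, (y.2.1 i) ^ 2)
      (∑ i, (x.2.1 i • Pp i + x.2.1 i • Pp i)) x := by
    apply HasFDerivAt.fun_sum
    intro i _
    have heq : (fun y : Y3 d => (y.2.1 i) ^ 2) = fun y : Y3 d => y.2.1 i * y.2.1 i := by
      funext y; ring
    rw [heq]
    exact (hp i).fun_mul (hp i)
  have h2 : HasFDerivAt (fun y : Y3 d => ∑ i, (y.2.2 i) ^ 2)
      (∑ i, (x.2.2 i • Pr i + x.2.2 i • Pr i)) x := by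
    apply HasFDerivAt.fun_sum
    intro i _
    have heq : (fun y : Y3 d => (y.2.2 i) ^ 2) = fun y : Y3 d => y.2.2 i * y.2.2 i := by
      funext y; ring
    rw [heq]
    exact (hr i).fun_mul (hr i)
  have h3 : HasFDerivAt (fun y : Y3 d => ∑ i, y.2.1 i * y.2.2 i)
      (∑ i, (x.2.1 i • Pr i + x.2.2 i • Pp i)) x :=
    HasFDerivAt.fun_sum (fun i _ => (hp i).fun_mul (hr i))
  refine ⟨_, ((((hasFDerivAt_const Chat x).add (h1.const_mul (13/32))).add
      (h2.const_mul (5/16))).add (hVq.const_mul (13/16))).add (h3.const_mul (3/16)), ?_⟩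
  intro v
  simp only [ContinuousLinearMap.add_apply, ContinuousLinearMap.smul_apply,
    ContinuousLinearMap.sum_apply, ContinuousLinearMap.comp_apply,
    ContinuousLinearMap.proj_apply, ContinuousLinearMap.coe_fst',
    ContinuousLinearMap.coe_snd', ContinuousLinearMap.zero_apply,
    smul_eq_mul, hPp, hPr, Finset.mul_sum, Finset.sum_add_distrib, add_mul]
  ring_nf
  simp only [mul_assoc, ← Finset.mul_sum]
  simp only [← mul_assoc, ← Finset.sum_mul]
  ring

end LyapAux

set_option maxHeartbeats 1000000 in
/-- (Lyapunov condition for powers.) Let `V ∈ C¹(ℝ^d)` be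
`ℤ^d`-periodic and let `G = Ĉ + (13/32)|p|² + (5/16)|r|² + (13/16)V(q) + (3/16)⟨p,r⟩`
with `Ĉ > 0` such that `G ≥ 1` and `LG ≤ −(1/4)G + d̂` for some `d̂ > 0`. Then for every
`l ≥ 1` there are `a_l, d_l > 0` with `L(G^l) ≤ −a_l G^l + d_l` everywhere. -/
theorem lyapunov_powers
    (d : ℕ) (hd : 1 ≤ d)
    (V : (Fin d → ℝ) → ℝ) (hV : ContDiff ℝ 1 V)
    (hVper : ∀ (k : Fin d → ℤ) (q : Fin d → ℝ), V (q + fun i => (k i : ℝ)) = V q)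
    (Chat : ℝ) (hChat : 0 < Chat)
    (G : Y3 d → ℝ)
    (hG : G = fun y => Chat + 13 / 32 * ∑ i, (y.2.1 i) ^ 2 + 5 / 16 * ∑ i, (y.2.2 i) ^ 2
      + 13 / 16 * V y.1 + 3 / 16 * ∑ i, y.2.1 i * y.2.2 i)
    (hG1 : ∀ x, 1 ≤ G x)
    (dhat : ℝ) (hdhat : 0 < dhat)
    (hLya : ∀ x, Lgle d V G x ≤ -(1 / 4) * G x + dhat) :
    ∀ l : ℕ, 1 ≤ l → ∃ al dl : ℝ, 0 < al ∧ 0 < dl ∧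
      ∀ x, Lgle d V (fun y => (G y) ^ l) x ≤ -al * (G x) ^ l + dl := by
  classical
  -- get a derivative for G
  have hex := fun x => LyapAux.hasFDerivAt_G d V hV Chat x
  choose D hD hDapp using hex
  have hDG : ∀ x, HasFDerivAt G (D x) x := by
    intro x; rw [hG]; exact hD x
  have hpow : ∀ (n : ℕ) (x : Y3 d),
      HasFDerivAt (fun y => G y ^ n) ((((n : ℕ) : ℝ) * G x ^ (n - 1)) • D x) x :=
    fun n x => LyapAux.hasFDerivAt_pow' (hDG x) n
  have hDei : ∀ (x : Y3 d) (i : Fin d),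
      D x ((0, 0, Pi.single i 1) : Y3 d) = 5/8 * x.2.2 i + 3/16 * x.2.1 i := by
    intro x i
    rw [hDapp]
    simp [Pi.single_apply, mul_ite, Finset.sum_ite_eq']
  -- inner function of second-order terms
  have hinner : ∀ (n : ℕ) (i : Fin d),
      (fun y : Y3 d => fderiv ℝ (fun z => G z ^ n) y ((0, 0, Pi.single i 1) : Y3 d))
      = fun y : Y3 d => (((n : ℕ) : ℝ) * G y ^ (n - 1)) * (5/8 * y.2.2 i + 3/16 * y.2.1 i) := by
    intro n i
    funext y
    rw [(hpow n y).fderiv]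
    simp [hDei]
  -- derivative of the coefficient function Hi
  have hHi : ∀ (x : Y3 d) (i : Fin d),
      HasFDerivAt (fun y : Y3 d => 5/8 * y.2.2 i + 3/16 * y.2.1 i)
        ((5/8 : ℝ) • ((ContinuousLinearMap.proj i).comp
            ((ContinuousLinearMap.snd ℝ (Fin d → ℝ) (Fin d → ℝ)).comp
              (ContinuousLinearMap.snd ℝ (Fin d → ℝ) ((Fin d → ℝ) × (Fin d → ℝ)))))
         + (3/16 : ℝ) • ((ContinuousLinearMap.proj i).comp
            ((ContinuousLinearMap.fst ℝ (Fin d → ℝ) (Fin d → ℝ)).comp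
              (ContinuousLinearMap.snd ℝ (Fin d → ℝ) ((Fin d → ℝ) × (Fin d → ℝ)))))) x := by
    intro x i
    have hc1 : HasFDerivAt (fun y : Y3 d => y.2.2 i)
        ((ContinuousLinearMap.proj i).comp
            ((ContinuousLinearMap.snd ℝ (Fin d → ℝ) (Fin d → ℝ)).comp
              (ContinuousLinearMap.snd ℝ (Fin d → ℝ) ((Fin d → ℝ) × (Fin d → ℝ))))) x :=
      ((ContinuousLinearMap.proj i).comp
            ((ContinuousLinearMap.snd ℝ (Fin d → ℝ) (Fin d → ℝ)).comp
              (ContinuousLinearMap.snd ℝ (Fin d → ℝ) ((Fin d → ℝ) × (Fin d → ℝ))))).hasFDerivAt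
    have hc2 : HasFDerivAt (fun y : Y3 d => y.2.1 i)
        ((ContinuousLinearMap.proj i).comp
            ((ContinuousLinearMap.fst ℝ (Fin d → ℝ) (Fin d → ℝ)).comp
              (ContinuousLinearMap.snd ℝ (Fin d → ℝ) ((Fin d → ℝ) × (Fin d → ℝ))))) x :=
      ((ContinuousLinearMap.proj i).comp
            ((ContinuousLinearMap.fst ℝ (Fin d → ℝ) (Fin d → ℝ)).comp
              (ContinuousLinearMap.snd ℝ (Fin d → ℝ) ((Fin d → ℝ) × (Fin d → ℝ))))).hasFDerivAt
    exact (hc1.const_mul (5/8)).add (hc2.const_mul (3/16))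
  have hCLMei : ∀ i : Fin d,
      ((5/8 : ℝ) • ((ContinuousLinearMap.proj i).comp
            ((ContinuousLinearMap.snd ℝ (Fin d → ℝ) (Fin d → ℝ)).comp
              (ContinuousLinearMap.snd ℝ (Fin d → ℝ) ((Fin d → ℝ) × (Fin d → ℝ)))))
         + (3/16 : ℝ) • ((ContinuousLinearMap.proj i).comp
            ((ContinuousLinearMap.fst ℝ (Fin d → ℝ) (Fin d → ℝ)).comp
              (ContinuousLinearMap.snd ℝ (Fin d → ℝ) ((Fin d → ℝ) × (Fin d → ℝ))))))
          ((0, 0, Pi.single i 1) : Y3 d) = 5/8 := by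
    intro i
    simp
  -- second order terms of G^n
  have hSOn : ∀ (n : ℕ) (x : Y3 d) (i : Fin d),
      fderiv ℝ (fun y : Y3 d => fderiv ℝ (fun z => G z ^ n) y ((0, 0, Pi.single i 1) : Y3 d)) x
        ((0, 0, Pi.single i 1) : Y3 d)
      = ((n : ℕ) : ℝ) * ((n - 1 : ℕ) : ℝ) * G x ^ (n - 1 - 1) * (5/8 * x.2.2 i + 3/16 * x.2.1 i) ^ 2
        + ((n : ℕ) : ℝ) * G x ^ (n - 1) * (5/8) := by
    intro n x i
    rw [hinner n i]
    have hmul := ((hpow (n - 1) x).const_mul ((n : ℕ) : ℝ)).fun_mul (hHi x i)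
    rw [hmul.fderiv]
    simp only [ContinuousLinearMap.add_apply, ContinuousLinearMap.smul_apply, smul_eq_mul,
      hCLMei, hDei]
    ring
  -- second order terms of G
  have hSOG : ∀ (x : Y3 d) (i : Fin d),
      fderiv ℝ (fun y : Y3 d => fderiv ℝ G y ((0, 0, Pi.single i 1) : Y3 d)) x
        ((0, 0, Pi.single i 1) : Y3 d) = 5/8 := by
    intro x i
    have he : (fun y : Y3 d => fderiv ℝ G y ((0, 0, Pi.single i 1) : Y3 d))
        = fun y : Y3 d => 5/8 * y.2.2 i + 3/16 * y.2.1 i := by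
      funext y; rw [(hDG y).fderiv, hDei]
    rw [he, (hHi x i).fderiv, hCLMei]
  -- the key identity
  have key : ∀ (n : ℕ) (x : Y3 d), Lgle d V (fun y => G y ^ n) x
      = ((n : ℕ) : ℝ) * G x ^ (n - 1) * Lgle d V G x
        + ((n : ℕ) : ℝ) * ((n - 1 : ℕ) : ℝ) * G x ^ (n - 1 - 1)
            * ∑ i, (5/8 * x.2.2 i + 3/16 * x.2.1 i) ^ 2 := by
    intro n x
    have hfdn : ∀ v : Y3 d, fderiv ℝ (fun y => G y ^ n) x v
        = (((n : ℕ) : ℝ) * G x ^ (n - 1)) * D x v := by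
      intro v; rw [(hpow n x).fderiv]; simp
    have hfdG : ∀ v : Y3 d, fderiv ℝ G x v = D x v := fun v => by rw [(hDG x).fderiv]
    simp only [Lgle, hfdn, hfdG, hSOn, hSOG]
    simp only [Finset.sum_add_distrib, Finset.mul_sum, Finset.sum_const, Finset.card_univ,
      Fintype.card_fin, nsmul_eq_mul, smul_eq_mul]
    ring
  -- lower bound for V
  obtain ⟨q₀, hq₀mem, hmin'⟩ :
      ∃ q₀ ∈ Set.Icc (0 : Fin d → ℝ) 1, IsMinOn V (Set.Icc (0 : Fin d → ℝ) 1) q₀ :=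
    isCompact_Icc.exists_isMinOn ⟨0, Set.left_mem_Icc.mpr (show (0 : Fin d → ℝ) ≤ 1 from fun i => zero_le_one)⟩
      hV.continuous.continuousOn
  have hmin : ∀ q ∈ Set.Icc (0 : Fin d → ℝ) 1, V q₀ ≤ V q := fun q hq => hmin' hq
  have hVlb : ∀ q, V q₀ ≤ V q := by
    intro q
    have h1 := hVper (fun i => ⌊q i⌋) (fun i => Int.fract (q i))
    have h2 : ((fun i => Int.fract (q i)) + fun i => ((⌊q i⌋ : ℤ) : ℝ)) = q :=
      funext fun i => Int.fract_add_floor (q i)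
    rw [h2] at h1
    rw [h1]
    exact hmin _ ⟨fun i => Int.fract_nonneg _, fun i => (Int.fract_lt_one _).le⟩
  obtain ⟨c, hcdef⟩ : ∃ c : ℝ, c = 8 * (1 + max 0 (-(13/16) * V q₀)) := ⟨_, rfl⟩
  have hc0 : 0 < c := by
    have := le_max_left (0 : ℝ) (-(13/16) * V q₀)
    rw [hcdef]; nlinarith
  have hS : ∀ x : Y3 d, ∑ i, (5/8 * x.2.2 i + 3/16 * x.2.1 i) ^ 2 ≤ c * G x := by
    intro x
    have h1 : ∑ i, (5/8 * x.2.2 i + 3/16 * x.2.1 i) ^ 2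
        ≤ ∑ i, (8 * (13/32 * (x.2.1 i) ^ 2) + 8 * (5/16 * (x.2.2 i) ^ 2)
            + 8 * (3/16 * (x.2.1 i * x.2.2 i))) :=
      Finset.sum_le_sum fun i _ => by
        nlinarith [sq_nonneg (x.2.1 i + x.2.2 i), sq_nonneg (x.2.1 i - x.2.2 i),
          sq_nonneg (x.2.1 i), sq_nonneg (x.2.2 i)]
    have h2 : ∑ i, (8 * (13/32 * (x.2.1 i) ^ 2) + 8 * (5/16 * (x.2.2 i) ^ 2)
            + 8 * (3/16 * (x.2.1 i * x.2.2 i)))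
        = 8 * (13/32 * ∑ i, (x.2.1 i) ^ 2 + 5/16 * ∑ i, (x.2.2 i) ^ 2
            + 3/16 * ∑ i, x.2.1 i * x.2.2 i) := by
      simp only [Finset.sum_add_distrib, ← Finset.mul_sum]
      ring
    have h3 : 13/32 * ∑ i, (x.2.1 i) ^ 2 + 5/16 * ∑ i, (x.2.2 i) ^ 2
          + 3/16 * ∑ i, x.2.1 i * x.2.2 i = G x - Chat - 13/16 * V x.1 := by
      simp only [hG]; ring
    have h4 : -(13/16) * V x.1 ≤ max 0 (-(13/16) * V q₀) := by
      have := hVlb x.1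
      have h5 := le_max_right (0 : ℝ) (-(13/16) * V q₀)
      nlinarith
    have h6 : G x - Chat - 13/16 * V x.1 ≤ (1 + max 0 (-(13/16) * V q₀)) * G x := by
      have h7 := hG1 x
      have h8 := le_max_left (0 : ℝ) (-(13/16) * V q₀)
      nlinarith
    calc ∑ i, (5/8 * x.2.2 i + 3/16 * x.2.1 i) ^ 2
        ≤ 8 * (13/32 * ∑ i, (x.2.1 i) ^ 2 + 5/16 * ∑ i, (x.2.2 i) ^ 2
            + 3/16 * ∑ i, x.2.1 i * x.2.2 i) := h2 ▸ h1
      _ = 8 * (G x - Chat - 13/16 * V x.1) := by rw [h3]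
      _ ≤ 8 * ((1 + max 0 (-(13/16) * V q₀)) * G x) := by linarith
      _ = c * G x := by rw [hcdef]; ring
  -- main estimate
  intro l hl
  have hl0 : (0 : ℝ) < (l : ℝ) := by exact_mod_cast Nat.lt_of_lt_of_le Nat.zero_lt_one hl
  obtain ⟨K, hKdef⟩ : ∃ K : ℝ, K = (l : ℝ) * dhat + (l : ℝ) * ((l - 1 : ℕ) : ℝ) * c := ⟨_, rfl⟩
  have hK0 : 0 < K := by
    have h1 : (0 : ℝ) ≤ (l : ℝ) * ((l - 1 : ℕ) : ℝ) * c := by positivity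
    have h2 : 0 < (l : ℝ) * dhat := mul_pos hl0 hdhat
    rw [hKdef]; linarith
  obtain ⟨B, hBdef⟩ : ∃ B : ℝ, B = max 1 (8 * K / (l : ℝ)) := ⟨_, rfl⟩
  have hB1 : (1 : ℝ) ≤ B := hBdef ▸ le_max_left _ _
  have hBpow : 0 < K * B ^ (l - 1) + 1 := by
    have := pow_pos (lt_of_lt_of_le one_pos hB1) (l - 1)
    nlinarith
  refine ⟨(l : ℝ) / 8, K * B ^ (l - 1) + 1, by positivity, hBpow, ?_⟩
  intro x
  rw [key l x]
  have ht1 : 1 ≤ G x := hG1 x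
  have htpos : 0 < G x := lt_of_lt_of_le one_pos ht1
  have hpowsucc : G x ^ (l - 1) * G x = G x ^ l := by
    have h : l - 1 + 1 = l := by omega
    rw [← h, pow_succ]
    simp [h]
  -- first order estimate
  have e2 : (l : ℝ) * G x ^ (l - 1) * Lgle d V G x
      ≤ (l : ℝ) * G x ^ (l - 1) * (-(1/4) * G x + dhat) := by
    apply mul_le_mul_of_nonneg_left (hLya x)
    positivity
  -- second order estimate
  have e1 : ((l : ℕ) : ℝ) * ((l - 1 : ℕ) : ℝ) * G x ^ (l - 1 - 1)
        * ∑ i, (5/8 * x.2.2 i + 3/16 * x.2.1 i) ^ 2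
      ≤ (l : ℝ) * ((l - 1 : ℕ) : ℝ) * c * G x ^ (l - 1) := by
    rcases Nat.lt_or_ge l 2 with h2 | h2
    · have hl1 : l = 1 := by omega
      subst hl1
      norm_num
    · have hll : l - 1 - 1 + 1 = l - 1 := by omega
      have hpownn : (0 : ℝ) ≤ G x ^ (l - 1 - 1) := by positivity
      have h6 : G x ^ (l - 1 - 1) * ∑ i, (5/8 * x.2.2 i + 3/16 * x.2.1 i) ^ 2
          ≤ G x ^ (l - 1 - 1) * (c * G x) :=
        mul_le_mul_of_nonneg_left (hS x) hpownn
      have h7 : G x ^ (l - 1 - 1) * (c * G x) = c * G x ^ (l - 1) := by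
        have hgg : G x ^ (l - 1) = G x ^ (l - 1 - 1) * G x := by rw [← pow_succ, hll]
        rw [hgg]; ring
      have h8 : (0 : ℝ) ≤ (l : ℝ) * ((l - 1 : ℕ) : ℝ) := by positivity
      calc ((l : ℕ) : ℝ) * ((l - 1 : ℕ) : ℝ) * G x ^ (l - 1 - 1)
            * ∑ i, (5/8 * x.2.2 i + 3/16 * x.2.1 i) ^ 2
          = ((l : ℝ) * ((l - 1 : ℕ) : ℝ)) * (G x ^ (l - 1 - 1)
            * ∑ i, (5/8 * x.2.2 i + 3/16 * x.2.1 i) ^ 2) := by ring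
        _ ≤ ((l : ℝ) * ((l - 1 : ℕ) : ℝ)) * (G x ^ (l - 1 - 1) * (c * G x)) :=
            mul_le_mul_of_nonneg_left h6 h8
        _ = (l : ℝ) * ((l - 1 : ℕ) : ℝ) * c * G x ^ (l - 1) := by rw [h7]; ring
  -- K bound
  have e4 : K * G x ^ (l - 1) ≤ (l : ℝ) / 8 * G x ^ l + K * B ^ (l - 1) := by
    rcases le_or_gt (G x) B with h | h
    · have h9 : G x ^ (l - 1) ≤ B ^ (l - 1) := pow_le_pow_left₀ (by linarith) h _
      have h10 : (0 : ℝ) ≤ (l : ℝ) / 8 * G x ^ l := by positivity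
      nlinarith
    · have hKl : K ≤ (l : ℝ) / 8 * G x := by
        have h11 : 8 * K / (l : ℝ) ≤ B := hBdef ▸ le_max_right _ _
        have h12 : 8 * K / (l : ℝ) < G x := lt_of_le_of_lt h11 h
        rw [div_lt_iff₀ hl0] at h12
        nlinarith
      have h13 : K * G x ^ (l - 1) ≤ ((l : ℝ) / 8 * G x) * G x ^ (l - 1) :=
        mul_le_mul_of_nonneg_right hKl (by positivity)
      have h14 : ((l : ℝ) / 8 * G x) * G x ^ (l - 1) = (l : ℝ) / 8 * G x ^ l := by
        rw [← hpowsucc]; ring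
      have h15 : (0 : ℝ) ≤ K * B ^ (l - 1) := by
        have := pow_pos (lt_of_lt_of_le one_pos hB1) (l - 1)
        nlinarith
      linarith
  -- combine
  have e3 : (l : ℝ) * G x ^ (l - 1) * (-(1/4) * G x + dhat)
      = -(l : ℝ) / 4 * G x ^ l + (l : ℝ) * dhat * G x ^ (l - 1) := by
    rw [← hpowsucc]; ring
  have heGx : (l : ℝ) * dhat * G x ^ (l - 1) + (l : ℝ) * ((l - 1 : ℕ) : ℝ) * c * G x ^ (l - 1)
      = K * G x ^ (l - 1) := by rw [hKdef]; ring
  have hfinal : -(l : ℝ) / 4 * G x ^ l + (l : ℝ) / 8 * G x ^ l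
      = -((l : ℝ) / 8) * G x ^ l := by ring
  linarith [e1, e2, e3, e4]
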